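/- Let X = {0,2}^ℤ and Y = {0,1,2}^ℤ be full shifts. There exists a continuous shift-commuting map f' : X' → Y' that is not the restriction of any continuous shift-commuting map f : X → Y. -/

import Mathlib

open Set
open Fin.NatCast

/-- The two-sided shift map on `A^ℤ`: `(tshift x) i = x (i+1)`. -/
def tshift {A : Type*} (x : ℤ → A) : ℤ → A := fun i => x (i + 1)

/-- A two-sided point is periodic if `σ^n x = x` for some `n ≥ 1`. -/
def TPeriodic {A : Type*} (x : ℤ → A) : Prop := ∃ n : ℕ, 1 ≤ n ∧ tshift^[n] x = x

/-- `Aper X` is the set `X'` of aperiodic points of `X`. -/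
def Aper {A : Type*} (X : Set (ℤ → A)) : Set (ℤ → A) := {x ∈ X | ¬ TPeriodic x}

/-- The word `w` occurs in `x` at position `i`. -/
def OccursAt {A : Type*} (w : List A) (x : ℤ → A) (i : ℤ) : Prop :=
  ∀ j : Fin w.length, x (i + (j : ℕ)) = w.get j

/-- The word `w` occurs somewhere in `x`. -/
def OccursIn {A : Type*} (w : List A) (x : ℤ → A) : Prop := ∃ i : ℤ, OccursAt w x i

/-- The word `w` occurs in some point of `X`. -/
def WordIn {A : Type*} (w : List A) (X : Set (ℤ → A)) : Prop := ∃ x ∈ X, OccursIn w x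

/-- `X` is a (two-sided) subshift: a closed shift-invariant subset of the full shift. -/
def IsSubshift {A : Type*} [TopologicalSpace A] (X : Set (ℤ → A)) : Prop :=
  IsClosed X ∧ tshift '' X = X

/-- `X` is an SFT: it is defined by forbidding a finite set of finite words. -/
def IsSFT {A : Type*} (X : Set (ℤ → A)) : Prop :=
  ∃ F : Set (List A), F.Finite ∧ X = {x | ∀ w ∈ F, ¬ OccursIn w x}

/-- `X` is transitive: any two words of its language can be joined by a connecting word. -/
def IsTransitiveShift {A : Type*} (X : Set (ℤ → A)) : Prop :=
  ∀ u v : List A, WordIn u X → WordIn v X → ∃ w : List A, WordIn (u ++ w ++ v) X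

/-- A map between subsets of full shifts is shift-commuting (wherever the shift stays
in the domain set, which is always the case for shift-invariant sets). -/
def ShiftCommuting2 {A B : Type*} {X : Set (ℤ → A)} {Y : Set (ℤ → B)} (f : X → Y) : Prop :=
  ∀ (x : X) (hx : tshift (x : ℤ → A) ∈ X),
    (f ⟨tshift (x : ℤ → A), hx⟩ : ℤ → B) = tshift (f x : ℤ → B)

/-- `φ : X → Y` restricts (in domain and codomain) to `φ' : X' → Y'`. -/
def RestrictsTo2 {A B : Type*} {X : Set (ℤ → A)} {Y : Set (ℤ → B)}
    (φ : X → Y) (φ' : Aper X → Aper Y) : Prop :=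
  ∀ (x : ℤ → A) (hx : x ∈ Aper X), (φ ⟨x, hx.1⟩ : ℤ → B) = (φ' ⟨x, hx⟩ : ℤ → B)


namespace S14

/-- Positions (distances) at which a `2` occurs around `i`. -/
def S2 (x : ℤ → Fin 3) (i : ℤ) : Set ℕ := {n | x (i + n) = 2 ∨ x (i - n) = 2}

/-- Distance from `i` to the nearest `2`. -/
noncomputable def dd (x : ℤ → Fin 3) (i : ℤ) : ℕ := sInf (S2 x i)

/-- The sliding-with-unbounded-window code. -/
noncomputable def F (x : ℤ → Fin 3) : ℤ → Fin 3 :=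
  fun i => if x i = 2 then 2 else ((dd x i % 2 : ℕ) : Fin 3)

lemma S2_nonempty {x : ℤ → Fin 3} (h : ∃ j, x j = 2) (i : ℤ) : (S2 x i).Nonempty := by
  obtain ⟨j, hj⟩ := h
  rcases le_or_gt i j with hle | hlt
  · exact ⟨(j - i).toNat, Or.inl (by rw [show i + (((j - i).toNat : ℕ) : ℤ) = j by omega]; exact hj)⟩
  · exact ⟨(i - j).toNat, Or.inr (by rw [show i - (((i - j).toNat : ℕ) : ℤ) = j by omega]; exact hj)⟩

lemma tshift_iter {A : Type*} (x : ℤ → A) (n : ℕ) (i : ℤ) : tshift^[n] x i = x (i + n) := by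
  induction n generalizing x i with
  | zero => simp
  | succ n ih =>
      rw [Function.iterate_succ_apply, ih (tshift x) i]
      show x (i + n + 1) = x (i + (n + 1 : ℕ))
      congr 1
      push_cast
      ring

lemma S2_shift (x : ℤ → Fin 3) (i : ℤ) : S2 (tshift x) i = S2 x (i + 1) := by
  ext n
  simp only [S2, tshift, Set.mem_setOf_eq]
  rw [show i + (n : ℤ) + 1 = i + 1 + n by ring, show i - (n : ℤ) + 1 = i + 1 - n by ring]

lemma dd_shift (x : ℤ → Fin 3) (i : ℤ) : dd (tshift x) i = dd x (i + 1) := by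
  unfold dd
  rw [S2_shift]

lemma F_shift (x : ℤ → Fin 3) : F (tshift x) = tshift (F x) := by
  funext i
  simp only [F, tshift, dd_shift]

lemma F_iter (x : ℤ → Fin 3) (n : ℕ) : F (tshift^[n] x) = tshift^[n] (F x) := by
  induction n with
  | zero => rfl
  | succ n ih => rw [Function.iterate_succ_apply', Function.iterate_succ_apply', F_shift, ih]

lemma F_ne_two {x : ℤ → Fin 3} {i : ℤ} (h : x i ≠ 2) : F x i ≠ 2 := by
  simp only [F, if_neg h]
  rcases Nat.mod_two_eq_zero_or_one (dd x i) with h2 | h2 <;> rw [h2] <;> decide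

lemma recover {x y : ℤ → Fin 3} (hx : ∀ i, x i = 0 ∨ x i = 2) (hy : ∀ i, y i = 0 ∨ y i = 2)
    (h : F x = F y) : x = y := by
  funext i
  have hFx := congrFun h i
  rcases hx i with h1 | h1 <;> rcases hy i with h2 | h2
  · rw [h1, h2]
  · exfalso
    apply F_ne_two (x := x) (i := i) (by rw [h1]; decide)
    rw [hFx]
    simp [F, h2]
  · exfalso
    apply F_ne_two (x := y) (i := i) (by rw [h2]; decide)
    rw [← hFx]
    simp [F, h1]
  · rw [h1, h2]

lemma mem_X_iter {x : ℤ → Fin 3} (hx : ∀ i, x i = 0 ∨ x i = 2) (n : ℕ) :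
    ∀ i, tshift^[n] x i = 0 ∨ tshift^[n] x i = 2 := by
  intro i
  rw [tshift_iter]
  exact hx _

lemma has_two {x : ℤ → Fin 3} (hx : x ∈ Aper {x : ℤ → Fin 3 | ∀ i, x i = 0 ∨ x i = 2}) :
    ∃ j, x j = 2 := by
  by_contra h
  push_neg at h
  exact hx.2 ⟨1, le_refl 1, by
    funext i
    have h0 := (hx.1 i).resolve_right (h i)
    have h1 := (hx.1 (i + 1)).resolve_right (h (i + 1))
    simp only [Function.iterate_one, tshift]
    rw [h0, h1]⟩

lemma F_aper {x : ℤ → Fin 3} (hx : x ∈ Aper {x : ℤ → Fin 3 | ∀ i, x i = 0 ∨ x i = 2}) :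
    ¬ TPeriodic (F x) := by
  rintro ⟨n, hn1, hn⟩
  apply hx.2
  refine ⟨n, hn1, ?_⟩
  have hFF : F (tshift^[n] x) = F x := by rw [F_iter, hn]
  exact recover (mem_X_iter hx.1 n) hx.1 hFF

lemma ev_coord (j : ℤ) (x₀ : ℤ → Fin 3) : ∀ᶠ x in nhds x₀, x j = x₀ j := by
  have ho : IsOpen {x : ℤ → Fin 3 | x j = x₀ j} := by
    have he : {x : ℤ → Fin 3 | x j = x₀ j} = (fun x : ℤ → Fin 3 => x j) ⁻¹' {x₀ j} := rfl
    rw [he]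
    exact IsOpen.preimage (continuous_apply (A := fun _ : ℤ => Fin 3) j)
      (isOpen_discrete ({x₀ j} : Set (Fin 3)))
  exact Filter.eventually_iff.mpr (ho.mem_nhds rfl)

lemma contAt (i : ℤ) (x₀ : ℤ → Fin 3) (h2 : ∃ j, x₀ j = 2) :
    ContinuousAt (fun x => F x i) x₀ := by
  have hne : (S2 x₀ i).Nonempty := S2_nonempty h2 i
  set m := dd x₀ i with hm
  have hmem₀ : m ∈ S2 x₀ i := Nat.sInf_mem hne
  have hev : ∀ᶠ x in nhds x₀,
      ∀ k ∈ Finset.range (m + 1), x (i + k) = x₀ (i + k) ∧ x (i - k) = x₀ (i - k) := by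
    rw [Filter.eventually_all_finset]
    intro k _
    exact (ev_coord (i + k) x₀).and (ev_coord (i - k) x₀)
  have key : ∀ x : ℤ → Fin 3,
      (∀ k ∈ Finset.range (m + 1), x (i + k) = x₀ (i + k) ∧ x (i - k) = x₀ (i - k)) →
      F x i = F x₀ i := by
    intro x hag
    have h0 : x i = x₀ i := by
      have := (hag 0 (Finset.mem_range.mpr (Nat.succ_pos m))).1
      simpa using this
    have hmemx : m ∈ S2 x i := by
      have hm' := hag m (Finset.mem_range.mpr (lt_add_one m))
      rcases hmem₀ with h | h
      · exact Or.inl (by rw [hm'.1]; exact h)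
      · exact Or.inr (by rw [hm'.2]; exact h)
    have hddx : dd x i = m := by
      have hle : dd x i ≤ m := Nat.sInf_le hmemx
      rcases lt_or_eq_of_le hle with hlt | heq
      · exfalso
        have hmemlt : dd x i ∈ S2 x i := Nat.sInf_mem ⟨m, hmemx⟩
        have hag' := hag (dd x i) (Finset.mem_range.mpr (by omega))
        have hin : dd x i ∈ S2 x₀ i := by
          rcases hmemlt with h | h
          · exact Or.inl (by rw [← hag'.1]; exact h)
          · exact Or.inr (by rw [← hag'.2]; exact h)
        exact Nat.notMem_of_lt_sInf hlt hin
      · exact heq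
    simp only [F, h0, hddx, ← hm]
  exact Filter.Tendsto.mono_right (Filter.tendsto_pure.mpr (hev.mono key)) (pure_le_nhds _)

/-- A point with a single `2` at position `a`. -/
def sgl (a : ℤ) : ℤ → Fin 3 := fun i => if i = a then 2 else 0

lemma sgl_mem (a : ℤ) : ∀ i, sgl a i = 0 ∨ sgl a i = 2 := fun i => by
  by_cases h : i = a <;> simp [sgl, h]

lemma sgl_aper (a : ℤ) : ¬ TPeriodic (sgl a) := by
  rintro ⟨n, hn1, hn⟩
  have h := congrFun hn a
  rw [tshift_iter] at h
  have h2 : (0 : Fin 3) = 2 := by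
    simpa [sgl, show a + (n : ℤ) ≠ a by omega] using h
  exact absurd h2 (by decide)

lemma dd_sgl (a : ℤ) (ha : 1 ≤ a) : dd (sgl a) 0 = a.toNat := by
  have hmm : a.toNat ∈ S2 (sgl a) 0 :=
    Or.inl (by simp only [sgl]; rw [if_pos (by omega)])
  have hs : dd (sgl a) 0 ∈ S2 (sgl a) 0 := Nat.sInf_mem ⟨_, hmm⟩
  have hle : dd (sgl a) 0 ≤ a.toNat := Nat.sInf_le hmm
  rcases hs with h | h
  · simp only [sgl] at h
    by_cases hc : (0 : ℤ) + (dd (sgl a) 0 : ℤ) = a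
    · omega
    · rw [if_neg hc] at h; exact absurd h (by decide)
  · simp only [sgl] at h
    by_cases hc : (0 : ℤ) - (dd (sgl a) 0 : ℤ) = a
    · omega
    · rw [if_neg hc] at h; exact absurd h (by decide)

lemma F_sgl (a : ℤ) (ha : 1 ≤ a) : F (sgl a) 0 = ((a.toNat % 2 : ℕ) : Fin 3) := by
  have h0 : sgl a 0 ≠ 2 := by
    simp only [sgl]
    rw [if_neg (by omega)]
    decide
  simp only [F, if_neg h0, dd_sgl a ha]

lemma sgl_tendsto (g : ℕ → ℤ) (hg : ∀ k : ℕ, (k : ℤ) ≤ g k) :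
    Filter.Tendsto (fun k => sgl (g k)) Filter.atTop (nhds (fun _ => (0 : Fin 3))) := by
  rw [tendsto_pi_nhds]
  intro i
  refine Filter.Tendsto.mono_right (Filter.tendsto_pure.mpr ?_) (pure_le_nhds _)
  filter_upwards [Filter.eventually_ge_atTop (i.natAbs + 1)] with k hk
  simp only [sgl]
  rw [if_neg (by have := hg k; omega)]

end S14

/-- With `X = {0,2}^ℤ` (viewed inside `{0,1,2}^ℤ`) and
`Y = {0,1,2}^ℤ` full shifts, there is a continuous shift-commuting map `f' : X' → Y'`
that is not the restriction of any continuous shift-commuting map `f : X → Y`. -/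
theorem statement14 :
    ∃ f' : Aper {x : ℤ → Fin 3 | ∀ i, x i = 0 ∨ x i = 2} → Aper (univ : Set (ℤ → Fin 3)),
      Continuous f' ∧ ShiftCommuting2 f' ∧
      ¬ ∃ f : {x : ℤ → Fin 3 | ∀ i, x i = 0 ∨ x i = 2} → (univ : Set (ℤ → Fin 3)),
        Continuous f ∧ ShiftCommuting2 f ∧ RestrictsTo2 f f' := by
  classical
  refine ⟨fun p => ⟨S14.F p.1, mem_univ _, S14.F_aper p.2⟩, ?_, ?_, ?_⟩
  · apply Continuous.subtype_mk
    apply continuous_pi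
    intro i
    rw [continuous_iff_continuousAt]
    intro p
    exact (S14.contAt i p.1 (S14.has_two p.2)).comp continuous_subtype_val.continuousAt
  · intro x hx
    show S14.F (tshift x.1) = tshift (S14.F x.1)
    exact S14.F_shift x.1
  · rintro ⟨f, hfc, -, hrest⟩
    set Z : {x : ℤ → Fin 3 | ∀ i, x i = 0 ∨ x i = 2} :=
      ⟨fun _ => 0, fun _ => Or.inl rfl⟩ with hZ
    have main : ∀ (g : ℕ → ℤ) (c : Fin 3), (∀ k : ℕ, (k : ℤ) ≤ g k) → (∀ k, 1 ≤ g k) →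
        (∀ k, (((g k).toNat % 2 : ℕ) : Fin 3) = c) → (f Z : ℤ → Fin 3) 0 = c := by
      intro g c hg1 hg2 hg3
      have hU : Filter.Tendsto
          (fun k => (⟨S14.sgl (g k), S14.sgl_mem (g k)⟩ :
            {x : ℤ → Fin 3 | ∀ i, x i = 0 ∨ x i = 2}))
          Filter.atTop (nhds Z) := by
        rw [Topology.IsEmbedding.subtypeVal.tendsto_nhds_iff]
        exact S14.sgl_tendsto g hg1
      have h1 : Filter.Tendsto
          (fun k => (f ⟨S14.sgl (g k), S14.sgl_mem (g k)⟩ : ℤ → Fin 3) 0)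
          Filter.atTop (nhds ((f Z : ℤ → Fin 3) 0)) :=
        (((continuous_apply (0 : ℤ)).comp continuous_subtype_val).tendsto (f Z)).comp
          ((hfc.tendsto Z).comp hU)
      have h2 : ∀ k, (f (⟨S14.sgl (g k), S14.sgl_mem (g k)⟩ :
          {x : ℤ → Fin 3 | ∀ i, x i = 0 ∨ x i = 2}) : ℤ → Fin 3) 0 = c := by
        intro k
        have haper : S14.sgl (g k) ∈ Aper {x : ℤ → Fin 3 | ∀ i, x i = 0 ∨ x i = 2} :=
          ⟨S14.sgl_mem (g k), S14.sgl_aper (g k)⟩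
        have hre := congrFun (hrest (S14.sgl (g k)) haper) (0 : ℤ)
        calc (f (⟨S14.sgl (g k), S14.sgl_mem (g k)⟩ :
              {x : ℤ → Fin 3 | ∀ i, x i = 0 ∨ x i = 2}) : ℤ → Fin 3) 0
            = S14.F (S14.sgl (g k)) 0 := hre
          _ = (((g k).toNat % 2 : ℕ) : Fin 3) := S14.F_sgl (g k) (hg2 k)
          _ = c := hg3 k
      have h1' : Filter.Tendsto (fun _ : ℕ => c) Filter.atTop (nhds ((f Z : ℤ → Fin 3) 0)) :=
        h1.congr h2
      exact tendsto_nhds_unique h1' tendsto_const_nhds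
    have e0 : (f Z : ℤ → Fin 3) 0 = 0 := by
      apply main (fun k => 2 * k + 2) 0 (by intro k; show (k : ℤ) ≤ 2 * k + 2; omega)
        (by intro k; show (1 : ℤ) ≤ 2 * k + 2; omega)
      intro k
      show (((2 * (k : ℤ) + 2).toNat % 2 : ℕ) : Fin 3) = 0
      rw [show ((2 * (k : ℤ) + 2).toNat % 2 : ℕ) = 0 by omega]
      simp
    have e1 : (f Z : ℤ → Fin 3) 0 = 1 := by
      apply main (fun k => 2 * k + 1) 1 (by intro k; show (k : ℤ) ≤ 2 * k + 1; omega)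
        (by intro k; show (1 : ℤ) ≤ 2 * k + 1; omega)
      intro k
      show (((2 * (k : ℤ) + 1).toNat % 2 : ℕ) : Fin 3) = 1
      rw [show ((2 * (k : ℤ) + 1).toNat % 2 : ℕ) = 1 by omega]
      simp
    rw [e0] at e1
    exact absurd e1 (by decide)
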